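/- Let n ≥ 3 be odd and a_1,…,a_{n−1} positive integers; set l_k = a_1 + ⋯ + a_k and N = l_{n−1} + 1 (so [a_1,…,a_{n−1},2] has N triangles). Then F[a_1,…,a_{n−1},2] = (1 + y_N)·F[a_1,…,a_{n−1}] + (Π_{i=l_{n−2}}^{N} y_i)·F[a_1,…,a_{n−2}], and F[a_1,…,a_{n−1},2] = (1 + y_N)·F[a_1,…,a_{n−1},1] − (Π_{i=l_{n−2}}^{N−1} y_i)·F[a_1,…,a_{n−2}]. -/

import Mathlib

/-!
Ancestral triangles of continued fractions (Yamada / Farey diagrams),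
following "Cluster variables and Alexander polynomials of 2-bridge knots".
-/

noncomputable section

open scoped BigOperators

attribute [local instance] Classical.propDecidable

namespace TwoBridge

/-- The continued fraction `[a₁,…,aₙ] = 1/(a₁ + 1/(a₂ + ⋯ + 1/aₙ))`. -/
def cf : List ℕ → ℚ
  | [] => 0
  | a :: t => 1 / ((a : ℚ) + cf t)

/-- Partial sums `l_k = a₁ + ⋯ + a_k`. -/
def ell (a : List ℕ) (k : ℕ) : ℕ := (a.take k).sum

/-- The index of the fan containing the `i`-th triangle (1-based): the least `k` with
`i ≤ l_k − 1`.  Fan 1 consists of `T_1, …, T_{a₁−1}` and, for `k ≥ 2`, fan `k` consists of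
`T_{l_{k−1}}, …, T_{l_k − 1}`. -/
def fanIdx (a : List ℕ) (i : ℕ) : ℕ := sInf {k | i < ell a k}

/-- The `i`-th triangle (1-based) of the ancestral triangle of `[a₁,…,aₙ]` is a *right*
triangle iff it lies in an odd-indexed fan (first `a₁ − 1` triangles are right, the next
`a₂` left, the next `a₃` right, and so on alternately). -/
def isRight (a : List ℕ) (i : ℕ) : Prop := Odd (fanIdx a i)

/-- Vertex indices of the ancestral triangle: `0 ↦ 0/1`, `1 ↦ 1/1`, and `j + 1 ↦` the apex
(new vertex) of the triangle `T_j`.  `edgeIdx a i` is the pair of vertex indices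
(left endpoint, right endpoint) of the most recently created edge after stacking `i`
triangles; the triangle `T_{i+1}` is stacked on this edge. -/
def edgeIdx (a : List ℕ) : ℕ → ℕ × ℕ
  | 0 => (0, 1)
  | i + 1 => if isRight a (i + 1) then ((edgeIdx a i).1, i + 2) else (i + 2, (edgeIdx a i).2)

/-- The labels (numerator, denominator) of the endpoints of the active edge after stacking
`i` triangles; the new vertex of each triangle is labelled by the mediant of the two
endpoints of the edge it is stacked on. -/
def edgeLbl (a : List ℕ) : ℕ → (ℕ × ℕ) × (ℕ × ℕ)
  | 0 => ((0, 1), (1, 1))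
  | i + 1 =>
      if isRight a (i + 1) then
        ((edgeLbl a i).1,
          ((edgeLbl a i).1.1 + (edgeLbl a i).2.1, (edgeLbl a i).1.2 + (edgeLbl a i).2.2))
      else
        (((edgeLbl a i).1.1 + (edgeLbl a i).2.1, (edgeLbl a i).1.2 + (edgeLbl a i).2.2),
          (edgeLbl a i).2)

/-- The label (numerator, denominator) of the vertex with index `v`. -/
def vtxLabel (a : List ℕ) (v : ℕ) : ℕ × ℕ :=
  if v = 0 then (0, 1)
  else if v = 1 then (1, 1)
  else ((edgeLbl a (v - 2)).1.1 + (edgeLbl a (v - 2)).2.1,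
        (edgeLbl a (v - 2)).1.2 + (edgeLbl a (v - 2)).2.2)

/-- `u` and `w` are joined by an edge of the ancestral triangle. -/
def IsEdgeAT (a : List ℕ) (u w : ℕ) : Prop :=
  (u = 0 ∧ w = 1) ∨ (u = 1 ∧ w = 0) ∨
    (2 ≤ u ∧ (w = (edgeIdx a (u - 2)).1 ∨ w = (edgeIdx a (u - 2)).2)) ∨
    (2 ≤ w ∧ (u = (edgeIdx a (w - 2)).1 ∨ u = (edgeIdx a (w - 2)).2))

/-- A step of a path: an edge of the ancestral triangle along which the denominator of the
vertex label strictly decreases. -/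
def IsStep (a : List ℕ) (u w : ℕ) : Prop :=
  IsEdgeAT a u w ∧ (vtxLabel a w).2 < (vtxLabel a u).2

/-- `IsPathFrom a s γ` : `γ` is a path of the ancestral triangle of `a` starting at the
vertex with index `s` and ending at `0/1` or `1/1`, the denominator of the label strictly
decreasing along every edge. -/
def IsPathFrom (a : List ℕ) (s : ℕ) (γ : List ℕ) : Prop :=
  γ.head? = some s ∧ (γ.getLast? = some 0 ∨ γ.getLast? = some 1) ∧ List.Chain' (IsStep a) γ

/-- The (indices of the) triangles cut off to the left of the path by a single step from
vertex `u` down to vertex `w`. -/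
def stepLeft (a : List ℕ) (u w : ℕ) : Finset ℕ :=
  if 2 ≤ u ∧ w = (edgeIdx a (u - 2)).2 then Finset.Ioc (w - 1) (u - 1) else ∅

/-- The set `S_γ` of (indices of) triangles lying on the left side of the path `γ`. -/
def pathLeftSet (a : List ℕ) (γ : List ℕ) : Finset ℕ :=
  (γ.zip γ.tail).foldr (fun p s => stepLeft a p.1 p.2 ∪ s) ∅


/-- The `F`-polynomial `F_{p/q} = Σ_{γ ∈ Γ_{p/q}} ∏_{T_i ∈ S_γ} y_i` of `p/q = [a₁,…,aₙ]`
(the variable `y_i` is `MvPolynomial.X i`; the top vertex has index `a.sum = N + 1`).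
For the empty continued fraction this gives `1`. -/
def Fpoly (a : List ℕ) : MvPolynomial ℕ ℤ :=
  ∑ᶠ γ ∈ {γ : List ℕ | IsPathFrom a a.sum γ},
    ∏ i ∈ pathLeftSet a γ, (MvPolynomial.X i : MvPolynomial ℕ ℤ)

/-- `F`-polynomial with the convention `F[a₁,…,a_{n−1},0] = F[a₁,…,a_{n−2}]`. -/
def FpolyC (l : List ℕ) : MvPolynomial ℕ ℤ :=
  if l.getLast? = some 0 then Fpoly l.dropLast.dropLast else Fpoly l

lemma ell_mono (a : List ℕ) : Monotone (ell a) := by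
  intro j k h
  have h1 : a.take j = (a.take k).take j := by rw [List.take_take, Nat.min_eq_left h]
  rw [ell, ell, h1]
  conv_rhs => rw [← List.take_append_drop j (a.take k)]
  rw [List.sum_append]
  exact Nat.le_add_right _ _

lemma fanIdx_eq (a : List ℕ) {i k : ℕ} (h1 : ∀ j, j < k → ell a j ≤ i)
    (h2 : i < ell a k) : fanIdx a i = k := by
  refine le_antisymm (Nat.sInf_le h2) ?_
  by_contra hlt
  push_neg at hlt
  have hmem : fanIdx a i ∈ {k | i < ell a k} := Nat.sInf_mem ⟨k, h2⟩
  have := h1 _ hlt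
  simp only [Set.mem_setOf_eq] at hmem
  omega

lemma ell_append (b c : List ℕ) {k : ℕ} (h : k ≤ b.length) : ell (b ++ c) k = ell b k := by
  rw [ell, ell, List.take_append_of_le_length h]

lemma ell_length (b : List ℕ) : ell b b.length = b.sum := by rw [ell, List.take_length]

lemma fanIdx_append (b c : List ℕ) {i : ℕ} (h : i < b.sum) :
    fanIdx (b ++ c) i = fanIdx b i := by
  have hb : b.length ∈ {k | i < ell b k} := by
    simp only [Set.mem_setOf_eq, ell_length]; exact h
  have hne : {k | i < ell b k}.Nonempty := ⟨b.length, hb⟩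
  have hmem : i < ell b (fanIdx b i) := Nat.sInf_mem hne
  have hmle : fanIdx b i ≤ b.length := Nat.sInf_le hb
  refine fanIdx_eq (b ++ c) (fun j hj => ?_) ?_
  · have hnot : j ∉ {k | i < ell b k} := Nat.notMem_of_lt_sInf hj
    simp only [Set.mem_setOf_eq, not_lt] at hnot
    rw [ell_append b c (le_trans (le_of_lt hj) hmle)]
    omega
  · rwa [ell_append b c hmle]

lemma isRight_append (b c : List ℕ) {i : ℕ} (h : i < b.sum) :
    isRight (b ++ c) i ↔ isRight b i := by
  rw [isRight, isRight, fanIdx_append b c h]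

lemma edgeIdx_append (b c : List ℕ) : ∀ i, i < b.sum → edgeIdx (b ++ c) i = edgeIdx b i
  | 0, _ => rfl
  | i + 1, h => by
    have h1 := isRight_append b c h
    have h2 := edgeIdx_append b c i (by omega)
    by_cases hr : isRight b (i + 1)
    · rw [edgeIdx, edgeIdx, if_pos (h1.mpr hr), if_pos hr, h2]
    · rw [edgeIdx, edgeIdx, if_neg (fun hh => hr (h1.mp hh)), if_neg hr, h2]

lemma edgeIdx_lt (a : List ℕ) : ∀ i, (edgeIdx a i).1 ≤ i + 1 ∧ (edgeIdx a i).2 ≤ i + 1 ∧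
    (edgeIdx a i).1 ≠ (edgeIdx a i).2
  | 0 => by simp [edgeIdx]
  | i + 1 => by
    have IH := edgeIdx_lt a i
    by_cases hr : isRight a (i + 1)
    · rw [edgeIdx, if_pos hr]; simp; omega
    · rw [edgeIdx, if_neg hr]; simp; omega


section Aux

/-- The `F`-polynomial summed over paths starting at vertex `s`. -/
def Fs (a : List ℕ) (s : ℕ) : MvPolynomial ℕ ℤ :=
  ∑ᶠ γ ∈ {γ : List ℕ | IsPathFrom a s γ},
    ∏ i ∈ pathLeftSet a γ, (MvPolynomial.X i : MvPolynomial ℕ ℤ)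

lemma Fpoly_eq_Fs (a : List ℕ) : Fpoly a = Fs a a.sum := rfl

lemma edgeLbl_denom_pos (a : List ℕ) : ∀ i, 1 ≤ (edgeLbl a i).1.2 ∧ 1 ≤ (edgeLbl a i).2.2
  | 0 => by simp [edgeLbl]
  | i + 1 => by
    have IH := edgeLbl_denom_pos a i
    by_cases hr : isRight a (i + 1)
    · rw [edgeLbl, if_pos hr]; dsimp only; omega
    · rw [edgeLbl, if_neg hr]; dsimp only; omega

lemma vtxLabel_two_le (a : List ℕ) {u : ℕ} (hu : 2 ≤ u) :
    vtxLabel a u = ((edgeLbl a (u - 2)).1.1 + (edgeLbl a (u - 2)).2.1,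
      (edgeLbl a (u - 2)).1.2 + (edgeLbl a (u - 2)).2.2) := by
  rw [vtxLabel, if_neg (by omega), if_neg (by omega)]

lemma vtxLabel_edgeIdx (a : List ℕ) : ∀ i, vtxLabel a (edgeIdx a i).1 = (edgeLbl a i).1 ∧
    vtxLabel a (edgeIdx a i).2 = (edgeLbl a i).2
  | 0 => by simp [edgeIdx, edgeLbl, vtxLabel]
  | i + 1 => by
    have IH := vtxLabel_edgeIdx a i
    have hnew : vtxLabel a (i + 2) = ((edgeLbl a i).1.1 + (edgeLbl a i).2.1,
        (edgeLbl a i).1.2 + (edgeLbl a i).2.2) := by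
      rw [vtxLabel_two_le a (by omega)]
      norm_num
    by_cases hr : isRight a (i + 1)
    · rw [edgeIdx, edgeLbl, if_pos hr, if_pos hr]
      exact ⟨IH.1, hnew⟩
    · rw [edgeIdx, edgeLbl, if_neg hr, if_neg hr]
      exact ⟨hnew, IH.2⟩

lemma mem_edgeIdx_self (a : List ℕ) (j : ℕ) :
    j + 2 = (edgeIdx a (j + 1)).1 ∨ j + 2 = (edgeIdx a (j + 1)).2 := by
  by_cases hr : isRight a (j + 1)
  · right; rw [edgeIdx, if_pos hr]
  · left; rw [edgeIdx, if_neg hr]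

lemma denom_succ_lt (a : List ℕ) {v : ℕ} (hv : 2 ≤ v) :
    (vtxLabel a v).2 < (vtxLabel a (v + 1)).2 := by
  obtain ⟨j, rfl⟩ : ∃ j, v = j + 2 := ⟨v - 2, by omega⟩
  have hpos := edgeLbl_denom_pos a (j + 1)
  have hcompat := vtxLabel_edgeIdx a (j + 1)
  have hnew : vtxLabel a (j + 2 + 1) = ((edgeLbl a (j + 1)).1.1 + (edgeLbl a (j + 1)).2.1,
      (edgeLbl a (j + 1)).1.2 + (edgeLbl a (j + 1)).2.2) := by
    rw [vtxLabel_two_le a (by omega)]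
    simp only [show j + 2 + 1 - 2 = j + 1 from by omega]
  rcases mem_edgeIdx_self a j with h | h
  · rw [hnew, h, hcompat.1]; omega
  · rw [hnew, h, hcompat.2]; omega

lemma denom_lt_of_lt (a : List ℕ) {v w : ℕ} (hv : 2 ≤ v) (h : v < w) :
    (vtxLabel a v).2 < (vtxLabel a w).2 := by
  induction w, h using Nat.le_induction with
  | base => exact denom_succ_lt a hv
  | succ w hw IH => exact lt_trans IH (denom_succ_lt a (by omega))

lemma isStep_iff (a : List ℕ) {u : ℕ} (hu : 2 ≤ u) (w : ℕ) :
    IsStep a u w ↔ w = (edgeIdx a (u - 2)).1 ∨ w = (edgeIdx a (u - 2)).2 := by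
  constructor
  · rintro ⟨he, hd⟩
    rcases he with ⟨h0, _⟩ | ⟨h1, _⟩ | ⟨_, h⟩ | ⟨hw2, h⟩
    · omega
    · omega
    · exact h
    · exfalso
      have hub := edgeIdx_lt a (w - 2)
      have huw : u < w := by rcases h with h | h <;> omega
      have := denom_lt_of_lt a hu huw
      omega
  · intro h
    have hcompat := vtxLabel_edgeIdx a (u - 2)
    have hpos := edgeLbl_denom_pos a (u - 2)
    refine ⟨Or.inr (Or.inr (Or.inl ⟨hu, h⟩)), ?_⟩
    rw [vtxLabel_two_le a hu]
    rcases h with h | h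
    · rw [h, hcompat.1]; dsimp only; omega
    · rw [h, hcompat.2]; dsimp only; omega

lemma vtxLabel_le_one (a : List ℕ) {s : ℕ} (hs : s ≤ 1) : (vtxLabel a s).2 = 1 := by
  interval_cases s <;> simp [vtxLabel]

lemma vtxLabel_denom_pos (a : List ℕ) (v : ℕ) : 1 ≤ (vtxLabel a v).2 := by
  rcases le_or_gt v 1 with h | h
  · rw [vtxLabel_le_one a h]
  · rw [vtxLabel_two_le a (by omega)]
    have := edgeLbl_denom_pos a (v - 2)
    dsimp only
    omega

lemma isPathFrom_le_one (a : List ℕ) {s : ℕ} (hs : s ≤ 1) {γ : List ℕ} :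
    IsPathFrom a s γ ↔ γ = [s] := by
  constructor
  · rintro ⟨hh, hl, hc⟩
    cases γ with
    | nil => simp at hh
    | cons x t =>
      have hx : x = s := by simpa using hh
      subst hx
      cases t with
      | nil => rfl
      | cons w t' =>
        exfalso
        simp only [List.Chain', List.isChain_cons_cons] at hc
        have hd := hc.1.2
        have h1 := vtxLabel_le_one a hs
        have h2 := vtxLabel_denom_pos a w
        omega
  · rintro rfl
    exact ⟨rfl, by interval_cases s <;> simp, List.isChain_singleton s⟩

lemma isPathFrom_cons_iff (a : List ℕ) {s : ℕ} (hs : 2 ≤ s) {γ : List ℕ} :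
    IsPathFrom a s γ ↔ ∃ γ', γ = s :: γ' ∧
      (IsPathFrom a (edgeIdx a (s - 2)).1 γ' ∨ IsPathFrom a (edgeIdx a (s - 2)).2 γ') := by
  constructor
  · rintro ⟨hh, hl, hc⟩
    cases γ with
    | nil => simp at hh
    | cons x t =>
      have hx : x = s := by simpa using hh
      subst hx
      cases t with
      | nil =>
        exfalso
        simp only [List.getLast?_singleton, Option.some.injEq] at hl
        omega
      | cons w t' =>
        simp only [List.Chain', List.isChain_cons_cons] at hc
        have hw := (isStep_iff a hs w).mp hc.1
        refine ⟨w :: t', rfl, ?_⟩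
        have hl' : (w :: t').getLast? = some 0 ∨ (w :: t').getLast? = some 1 := by
          rwa [List.getLast?_cons_cons] at hl
        have hpf : IsPathFrom a w (w :: t') := ⟨rfl, hl', hc.2⟩
        rcases hw with h | h
        · exact Or.inl (h ▸ hpf)
        · exact Or.inr (h ▸ hpf)
  · rintro ⟨γ', rfl, h⟩
    have hex : ∃ w, (w = (edgeIdx a (s - 2)).1 ∨ w = (edgeIdx a (s - 2)).2) ∧
        IsPathFrom a w γ' := by
      rcases h with h | h
      exacts [⟨_, Or.inl rfl, h⟩, ⟨_, Or.inr rfl, h⟩]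
    obtain ⟨w, hw, hpf⟩ := hex
    have hh := hpf.1
    have hl := hpf.2.1
    have hc := hpf.2.2
    cases γ' with
    | nil => simp at hh
    | cons x t =>
      have hx : x = w := by simpa using hh
      refine ⟨rfl, by rwa [List.getLast?_cons_cons], ?_⟩
      simp only [List.Chain', List.isChain_cons_cons]
      exact ⟨by rw [hx]; exact (isStep_iff a hs w).mpr hw, hc⟩

lemma isPathFrom_vert_le (a : List ℕ) (s : ℕ) :
    ∀ γ, IsPathFrom a s γ → ∀ x ∈ γ, x ≤ s := by
  induction s using Nat.strong_induction_on with
  | _ s IH =>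
    intro γ hγ x hx
    by_cases hs : 2 ≤ s
    · obtain ⟨γ', rfl, h⟩ := (isPathFrom_cons_iff a hs).mp hγ
      have hb := edgeIdx_lt a (s - 2)
      rcases List.mem_cons.mp hx with rfl | hx'
      · exact le_rfl
      · rcases h with h | h
        · have := IH _ (by omega) γ' h x hx'; omega
        · have := IH _ (by omega) γ' h x hx'; omega
    · have := (isPathFrom_le_one a (by omega)).mp hγ
      subst this
      rcases List.mem_singleton.mp hx with rfl
      exact le_rfl

lemma pathLeftSet_cons (a : List ℕ) (s w : ℕ) (t : List ℕ) :
    pathLeftSet a (s :: w :: t) = stepLeft a s w ∪ pathLeftSet a (w :: t) := rfl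

lemma pathLeftSet_singleton (a : List ℕ) (s : ℕ) : pathLeftSet a [s] = ∅ := rfl

lemma mem_stepLeft (a : List ℕ) {u w x : ℕ} (h : x ∈ stepLeft a u w) :
    w - 1 < x ∧ x ≤ u - 1 := by
  rw [stepLeft] at h
  split_ifs at h with hc
  · exact Finset.mem_Ioc.mp h
  · simp at h

lemma pathLeftSet_bound (a : List ℕ) (s : ℕ) :
    ∀ γ, IsPathFrom a s γ → ∀ x ∈ pathLeftSet a γ, x < s := by
  induction s using Nat.strong_induction_on with
  | _ s IH =>
    intro γ hγ x hx
    by_cases hs : 2 ≤ s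
    · obtain ⟨γ', rfl, h⟩ := (isPathFrom_cons_iff a hs).mp hγ
      have hb := edgeIdx_lt a (s - 2)
      have hex : ∃ w, w ≤ s - 1 ∧ IsPathFrom a w γ' := by
        rcases h with h | h
        exacts [⟨_, by omega, h⟩, ⟨_, by omega, h⟩]
      obtain ⟨w, hwle, hpf⟩ := hex
      have hh := hpf.1
      cases γ' with
      | nil => simp at hh
      | cons y t =>
        rw [pathLeftSet_cons] at hx
        rcases Finset.mem_union.mp hx with hx' | hx'
        · have := mem_stepLeft a hx'; omega
        · have := IH w (by omega) _ hpf x hx'; omega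
    · have := (isPathFrom_le_one a (by omega)).mp hγ
      subst this
      rw [pathLeftSet_singleton] at hx
      simp at hx

lemma pathSet_finite (a : List ℕ) (s : ℕ) : {γ : List ℕ | IsPathFrom a s γ}.Finite := by
  induction s using Nat.strong_induction_on with
  | _ s IH =>
    by_cases hs : 2 ≤ s
    · have hb := edgeIdx_lt a (s - 2)
      have h1 := IH (edgeIdx a (s - 2)).1 (by omega)
      have h2 := IH (edgeIdx a (s - 2)).2 (by omega)
      have hset : {γ : List ℕ | IsPathFrom a s γ} = (fun γ' => s :: γ') ''
          ({γ' | IsPathFrom a (edgeIdx a (s - 2)).1 γ'} ∪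
            {γ' | IsPathFrom a (edgeIdx a (s - 2)).2 γ'}) := by
        ext γ
        simp only [Set.mem_image, Set.mem_union, Set.mem_setOf_eq, isPathFrom_cons_iff a hs]
        constructor
        · rintro ⟨γ', rfl, h⟩; exact ⟨γ', h, rfl⟩
        · rintro ⟨γ', h, rfl⟩; exact ⟨γ', rfl, h⟩
      rw [hset]
      exact (h1.union h2).image _
    · exact Set.Finite.subset (Set.finite_singleton [s])
        (fun γ hγ => (isPathFrom_le_one a (by omega)).mp hγ)

lemma Fs_le_one (a : List ℕ) {s : ℕ} (hs : s ≤ 1) : Fs a s = 1 := by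
  rw [Fs]
  have hset : {γ : List ℕ | IsPathFrom a s γ} = {[s]} := by
    ext γ
    simp only [Set.mem_setOf_eq, Set.mem_singleton_iff, isPathFrom_le_one a hs]
  rw [hset, finsum_mem_singleton, pathLeftSet_singleton, Finset.prod_empty]

lemma Fs_rec (a : List ℕ) {s : ℕ} (hs : 2 ≤ s) :
    Fs a s =
      (∏ i ∈ stepLeft a s (edgeIdx a (s - 2)).1, (MvPolynomial.X i : MvPolynomial ℕ ℤ)) *
          Fs a (edgeIdx a (s - 2)).1 +
        (∏ i ∈ stepLeft a s (edgeIdx a (s - 2)).2, (MvPolynomial.X i : MvPolynomial ℕ ℤ)) *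
          Fs a (edgeIdx a (s - 2)).2 := by
  have hb := edgeIdx_lt a (s - 2)
  have key : ∀ w : ℕ,
      (∑ᶠ γ' ∈ {γ' : List ℕ | IsPathFrom a w γ'},
        ∏ i ∈ pathLeftSet a (s :: γ'), (MvPolynomial.X i : MvPolynomial ℕ ℤ)) =
      (∏ i ∈ stepLeft a s w, (MvPolynomial.X i : MvPolynomial ℕ ℤ)) * Fs a w := by
    intro w
    rw [Fs, finsum_mem_eq_finite_toFinset_sum _ (pathSet_finite a w),
      finsum_mem_eq_finite_toFinset_sum _ (pathSet_finite a w), Finset.mul_sum]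
    refine Finset.sum_congr rfl (fun γ' hγ' => ?_)
    have hpf : IsPathFrom a w γ' := by simpa using hγ'
    have hh := hpf.1
    cases γ' with
    | nil => simp at hh
    | cons y t =>
      have hy : y = w := by simpa using hh
      rw [pathLeftSet_cons, Finset.prod_union, hy]
      rw [Finset.disjoint_left]
      intro x hx1 hx2
      have h1 := mem_stepLeft a hx1
      have h2 := pathLeftSet_bound a w _ hpf x hx2
      rw [hy] at h1
      omega
  have hinj : Set.InjOn (fun γ' : List ℕ => s :: γ')
      ({γ' | IsPathFrom a (edgeIdx a (s - 2)).1 γ'} ∪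
        {γ' | IsPathFrom a (edgeIdx a (s - 2)).2 γ'}) := by
    intro x _ y _ h
    simpa using h
  have hdisj : Disjoint {γ' : List ℕ | IsPathFrom a (edgeIdx a (s - 2)).1 γ'}
      {γ' : List ℕ | IsPathFrom a (edgeIdx a (s - 2)).2 γ'} := by
    rw [Set.disjoint_left]
    intro γ' h1 h2
    have hh1 := h1.1
    have hh2 := h2.1
    rw [hh1] at hh2
    exact hb.2.2 (by simpa using hh2)
  have hset : {γ : List ℕ | IsPathFrom a s γ} = (fun γ' => s :: γ') ''
      ({γ' | IsPathFrom a (edgeIdx a (s - 2)).1 γ'} ∪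
        {γ' | IsPathFrom a (edgeIdx a (s - 2)).2 γ'}) := by
    ext γ
    simp only [Set.mem_image, Set.mem_union, Set.mem_setOf_eq, isPathFrom_cons_iff a hs]
    constructor
    · rintro ⟨γ', rfl, h⟩; exact ⟨γ', h, rfl⟩
    · rintro ⟨γ', h, rfl⟩; exact ⟨γ', rfl, h⟩
  rw [Fs, hset, finsum_mem_image hinj,
    finsum_mem_union hdisj (pathSet_finite a _) (pathSet_finite a _), key, key]

lemma stepLeft_congr {a b : List ℕ} {u : ℕ} (h : edgeIdx a (u - 2) = edgeIdx b (u - 2))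
    (w : ℕ) : stepLeft a u w = stepLeft b u w := by
  rw [stepLeft, stepLeft, h]

lemma Fs_append (b c : List ℕ) : ∀ s, s ≤ b.sum → Fs (b ++ c) s = Fs b s := by
  intro s
  induction s using Nat.strong_induction_on with
  | _ s IH =>
    intro hs
    by_cases h2 : 2 ≤ s
    · have hidx : edgeIdx (b ++ c) (s - 2) = edgeIdx b (s - 2) :=
        edgeIdx_append b c _ (by omega)
      have hb := edgeIdx_lt b (s - 2)
      rw [Fs_rec _ h2, Fs_rec _ h2, hidx, stepLeft_congr hidx, stepLeft_congr hidx,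
        IH _ (by omega) (by omega), IH _ (by omega) (by omega)]
    · rw [Fs_le_one _ (by omega), Fs_le_one _ (by omega)]

lemma stepLeft_eq_of_ne (a : List ℕ) {u w : ℕ} (h : w ≠ (edgeIdx a (u - 2)).2) :
    stepLeft a u w = ∅ := by
  rw [stepLeft, if_neg]
  rintro ⟨-, hh⟩
  exact h hh

lemma Fs_rec' (a : List ℕ) {s x y : ℕ} (hs : 2 ≤ s) (h : edgeIdx a (s - 2) = (x, y))
    (hne : x ≠ y) :
    Fs a s = Fs a x +
      (∏ i ∈ Finset.Ioc (y - 1) (s - 1), (MvPolynomial.X i : MvPolynomial ℕ ℤ)) * Fs a y := by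
  rw [Fs_rec a hs, h]
  have h1 : stepLeft a s x = ∅ := stepLeft_eq_of_ne a (by rw [h]; exact hne)
  have h2 : stepLeft a s y = Finset.Ioc (y - 1) (s - 1) := by
    rw [stepLeft, if_pos ⟨hs, by rw [h]⟩]
  simp only [h1, h2, Finset.prod_empty, one_mul]

/-- Structure of the final edge of `AT(as)` when `as` has even length `≥ 2` and positive
entries: the active edge after all triangles is `(as.sum, as.dropLast.sum)`. -/
lemma edgeIdx_last (as : List ℕ) (hpos : ∀ x ∈ as, 0 < x) (hlen : 2 ≤ as.length)
    (heven : Even as.length) :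
    edgeIdx as (as.sum - 1) = (as.sum, as.dropLast.sum) := by
  set n := as.length with hn
  set S := as.sum with hS
  set M := as.dropLast.sum with hM
  have hne : as ≠ [] := by
    refine List.ne_nil_of_length_pos ?_
    omega
  have hdrop : as.dropLast ++ [as.getLast hne] = as := List.dropLast_append_getLast hne
  have hlast_pos : 0 < as.getLast hne := hpos _ (List.getLast_mem hne)
  have hMS : M + as.getLast hne = S := by
    conv_rhs => rw [hS, ← hdrop]
    rw [List.sum_append, List.sum_singleton]
  have hM1 : 1 ≤ M := by
    by_contra hc
    push_neg at hc
    have hM0 : M = 0 := by omega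
    have hall : ∀ x ∈ as.dropLast, x = 0 := by
      intro x hx
      have := List.sum_eq_zero_iff.mp hM0
      exact this x hx
    have hdl : as.dropLast ≠ [] := by
      have : as.dropLast.length = n - 1 := by rw [List.length_dropLast]
      intro h; rw [h] at this; simp at this; omega
    obtain ⟨x, hx⟩ := List.exists_mem_of_ne_nil _ hdl
    have hx' : x ∈ as := List.dropLast_subset as hx
    have := hpos x hx'
    have := hall x hx
    omega
  have hS2 : 2 ≤ S := by omega
  have hMltS : M < S := by omega
  have helln : ell as n = S := ell_length as
  have helln1 : ell as (n - 1) = M := by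
    rw [ell, ← List.dropLast_eq_take]
  have helln2 : ell as (n - 2) < M := by
    have hlt : n - 2 < as.length := by omega
    have hsucc := List.sum_take_succ as (n - 2) hlt
    have hrw : n - 2 + 1 = n - 1 := by omega
    rw [hrw] at hsucc
    have hget : 0 < as[n - 2] := hpos _ (List.getElem_mem hlt)
    rw [ell] at helln1 ⊢
    omega
  have hoddn1 : Odd (n - 1) := by
    obtain ⟨k, hk⟩ := heven
    exact ⟨k - 1, by omega⟩
  have hnotoddn : ¬ Odd n := by
    rw [Nat.not_odd_iff_even]
    exact heven
  have hfan_top : ∀ i, M ≤ i → i < S → fanIdx as i = n := by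
    intro i h1 h2
    refine fanIdx_eq as (fun j hj => ?_) (by rw [helln]; exact h2)
    have := ell_mono as (show j ≤ n - 1 by omega)
    omega
  have hfan_prev : ∀ i, ell as (n - 2) ≤ i → i < M → fanIdx as i = n - 1 := by
    intro i h1 h2
    refine fanIdx_eq as (fun j hj => ?_) (by rw [helln1]; exact h2)
    have := ell_mono as (show j ≤ n - 2 by omega)
    omega
  have hnotright : ∀ i, M ≤ i → i < S → ¬ isRight as i := by
    intro i h1 h2 hr
    rw [isRight, hfan_top i h1 h2] at hr
    exact hnotoddn hr
  have hC : ∀ i, M - 1 ≤ i → i ≤ S - 1 → (edgeIdx as i).2 = M := by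
    intro i hi
    induction i, hi using Nat.le_induction with
    | base =>
      intro _
      by_cases hM2 : 2 ≤ M
      · have h1 : M - 1 = (M - 2) + 1 := by omega
        have hr : isRight as ((M - 2) + 1) := by
          rw [isRight, ← h1, hfan_prev (M - 1) (by omega) (by omega)]
          exact hoddn1
        rw [h1, edgeIdx, if_pos hr]
        simp only
        omega
      · have hM1' : M = 1 := by omega
        rw [show M - 1 = 0 by omega]
        simp [edgeIdx]
        omega
    | succ i hi IH =>
      intro hle
      have hnr : ¬ isRight as (i + 1) := hnotright (i + 1) (by omega) (by omega)
      rw [edgeIdx, if_neg hnr]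
      exact IH (by omega)
  have h1 : S - 1 = (S - 2) + 1 := by omega
  have hnr : ¬ isRight as ((S - 2) + 1) := by
    rw [← h1]
    exact hnotright (S - 1) (by omega) (by omega)
  rw [h1, edgeIdx, if_neg hnr]
  have := hC (S - 2) (by omega) (by omega)
  rw [Prod.ext_iff]
  constructor
  · simp only; omega
  · simpa using this

lemma sum_facts (as : List ℕ) (hpos : ∀ x ∈ as, 0 < x) (hlen : 2 ≤ as.length) :
    1 ≤ as.dropLast.sum ∧ as.dropLast.sum < as.sum := by
  have hne : as ≠ [] := List.ne_nil_of_length_pos (by omega)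
  have hdrop : as.dropLast ++ [as.getLast hne] = as := List.dropLast_append_getLast hne
  have hlast_pos : 0 < as.getLast hne := hpos _ (List.getLast_mem hne)
  have hMS : as.dropLast.sum + as.getLast hne = as.sum := by
    conv_rhs => rw [← hdrop]
    rw [List.sum_append, List.sum_singleton]
  have hM1 : 1 ≤ as.dropLast.sum := by
    by_contra hc
    push_neg at hc
    have hM0 : as.dropLast.sum = 0 := by omega
    have hall := List.sum_eq_zero_iff.mp hM0
    have hdl : as.dropLast ≠ [] := by
      have hl : as.dropLast.length = as.length - 1 := List.length_dropLast
      refine List.ne_nil_of_length_pos ?_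
      omega
    obtain ⟨x, hx⟩ := List.exists_mem_of_ne_nil _ hdl
    have := hpos x (List.dropLast_subset as hx)
    have := hall x hx
    omega
  exact ⟨hM1, by omega⟩

end Aux

/-- **Corollary.**  Let `n ≥ 3` be odd and `a₁,…,a_{n−1}` positive integers (the list
`as`); set `l_k = a₁ + ⋯ + a_k` and `N = l_{n−1} + 1` (so `[a₁,…,a_{n−1},2]` has `N`
triangles).  Then
`F[a₁,…,a_{n−1},2] = (1 + y_N)·F[a₁,…,a_{n−1}] + (∏_{i=l_{n−2}}^{N} y_i)·F[a₁,…,a_{n−2}]`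
and
`F[a₁,…,a_{n−1},2] = (1 + y_N)·F[a₁,…,a_{n−1},1] − (∏_{i=l_{n−2}}^{N−1} y_i)·F[a₁,…,a_{n−2}]`. -/
theorem F_polynomial_recursion_two_odd (as : List ℕ)
    (hpos : ∀ x ∈ as, 0 < x) (hodd : Odd (as.length + 1)) (h3 : 3 ≤ as.length + 1) :
    Fpoly (as ++ [2]) =
        (1 + MvPolynomial.X (as.sum + 1)) * Fpoly as +
          (∏ i ∈ Finset.Icc as.dropLast.sum (as.sum + 1),
              (MvPolynomial.X i : MvPolynomial ℕ ℤ)) * Fpoly as.dropLast ∧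
    Fpoly (as ++ [2]) =
        (1 + MvPolynomial.X (as.sum + 1)) * Fpoly (as ++ [1]) -
          (∏ i ∈ Finset.Icc as.dropLast.sum as.sum,
              (MvPolynomial.X i : MvPolynomial ℕ ℤ)) * Fpoly as.dropLast := by
  classical
  set n := as.length with hn
  set S := as.sum with hSdef
  set M := as.dropLast.sum with hMdef
  have hlen : 2 ≤ n := by omega
  have heven : Even n := by
    rcases hodd with ⟨k, hk⟩
    exact ⟨k, by omega⟩
  have hne : as ≠ [] := List.ne_nil_of_length_pos (by omega)
  obtain ⟨hM1, hMltS⟩ := sum_facts as hpos hlen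
  have hS2 : 2 ≤ S := by omega
  have hedge : edgeIdx as (S - 1) = (S, M) := edgeIdx_last as hpos hlen heven
  -- sums and lengths of the extended lists
  have hsum2 : (as ++ [2]).sum = S + 2 := by rw [List.sum_append]; simp [hSdef]
  have hsum1 : (as ++ [1]).sum = S + 1 := by rw [List.sum_append]; simp [hSdef]
  have hlen2 : (as ++ [2]).length = n + 1 := by simp [hn]
  -- fan structure of `as ++ [2]`
  have helltop : ell (as ++ [2]) (n + 1) = S + 2 := by
    have h := ell_length (as ++ [2])
    rwa [hlen2, hsum2] at h
  have hellje : ∀ j, j ≤ n → ell (as ++ [2]) j ≤ S := by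
    intro j hj
    rw [ell_append as [2] hj]
    have h1 := ell_mono as hj
    have h2 := ell_length as
    rw [← hn, ← hSdef] at h2
    omega
  have hfanS : fanIdx (as ++ [2]) S = n + 1 := by
    refine fanIdx_eq _ (fun j hj => hellje j (by omega)) ?_
    rw [helltop]; omega
  have hfanS1 : fanIdx (as ++ [2]) (S + 1) = n + 1 := by
    refine fanIdx_eq _ (fun j hj => by have := hellje j (by omega); omega) ?_
    rw [helltop]; omega
  have hrS : isRight (as ++ [2]) S := by
    rw [isRight, hfanS]; exact hodd
  have hrS1 : isRight (as ++ [2]) (S + 1) := by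
    rw [isRight, hfanS1]; exact hodd
  -- edges of `as ++ [2]`
  have hedgeA : edgeIdx (as ++ [2]) (S - 1) = (S, M) := by
    rw [edgeIdx_append as [2] _ (by omega), hedge]
  have hedgeB : edgeIdx (as ++ [2]) S = (S, S + 1) := by
    have h1 : S = (S - 1) + 1 := by omega
    have hrS' : isRight (as ++ [2]) ((S - 1) + 1) := by rwa [← h1]
    conv_lhs => rw [h1]
    rw [edgeIdx, if_pos hrS', hedgeA]
    simp only [Prod.mk.injEq]
    refine ⟨by trivial, by omega⟩
  have hedgeC : edgeIdx (as ++ [2]) (S + 1) = (S, S + 2) := by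
    rw [edgeIdx, if_pos hrS1, hedgeB]
  -- edge of `as ++ [1]`
  have hedgeA1 : edgeIdx (as ++ [1]) (S - 1) = (S, M) := by
    rw [edgeIdx_append as [1] _ (by omega), hedge]
  -- interval bookkeeping
  have hIoc1 : Finset.Ioc (S + 1 - 1) (S + 2 - 1) = {S + 1} := by
    ext x
    simp only [Finset.mem_Ioc, Finset.mem_singleton]
    omega
  have hIcc : Finset.Ioc (M - 1) (S + 1 - 1) = Finset.Icc M S := by
    ext x
    simp only [Finset.mem_Ioc, Finset.mem_Icc]
    omega
  -- evaluation of the `Fs` at low vertices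
  have hFsS2 : Fs (as ++ [2]) S = Fpoly as := by
    rw [Fs_append as [2] S le_rfl, Fpoly_eq_Fs]
  have hFsS1 : Fs (as ++ [1]) S = Fpoly as := by
    rw [Fs_append as [1] S le_rfl, Fpoly_eq_Fs]
  have hasdrop : as = as.dropLast ++ [as.getLast hne] := (List.dropLast_append_getLast hne).symm
  have hFsMas : Fs as M = Fpoly as.dropLast := by
    conv_lhs => rw [hasdrop]
    rw [Fs_append as.dropLast _ M le_rfl, Fpoly_eq_Fs]
  have hFsM2 : Fs (as ++ [2]) M = Fpoly as.dropLast := by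
    rw [Fs_append as [2] M (le_of_lt hMltS), hFsMas]
  have hFsM1 : Fs (as ++ [1]) M = Fpoly as.dropLast := by
    rw [Fs_append as [1] M (le_of_lt hMltS), hFsMas]
  -- the three recursions
  have hrec1 : Fs (as ++ [2]) (S + 2) = Fs (as ++ [2]) S +
      (∏ i ∈ Finset.Ioc (S + 1 - 1) (S + 2 - 1), (MvPolynomial.X i : MvPolynomial ℕ ℤ)) *
        Fs (as ++ [2]) (S + 1) :=
    Fs_rec' _ (by omega) (by rw [show S + 2 - 2 = S from by omega]; exact hedgeB) (by omega)
  have hrec2 : Fs (as ++ [2]) (S + 1) = Fs (as ++ [2]) S +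
      (∏ i ∈ Finset.Ioc (M - 1) (S + 1 - 1), (MvPolynomial.X i : MvPolynomial ℕ ℤ)) *
        Fs (as ++ [2]) M :=
    Fs_rec' _ (by omega) (by rw [show S + 1 - 2 = S - 1 from by omega]; exact hedgeA)
      (by omega)
  have hrec3 : Fs (as ++ [1]) (S + 1) = Fs (as ++ [1]) S +
      (∏ i ∈ Finset.Ioc (M - 1) (S + 1 - 1), (MvPolynomial.X i : MvPolynomial ℕ ℤ)) *
        Fs (as ++ [1]) M :=
    Fs_rec' _ (by omega) (by rw [show S + 1 - 2 = S - 1 from by omega]; exact hedgeA1)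
      (by omega)
  have hF2 : Fpoly (as ++ [2]) = (1 + MvPolynomial.X (S + 1)) * Fpoly as +
      ((∏ i ∈ Finset.Icc M S, (MvPolynomial.X i : MvPolynomial ℕ ℤ)) *
        MvPolynomial.X (S + 1)) * Fpoly as.dropLast := by
    rw [Fpoly_eq_Fs, hsum2, hrec1, hIoc1, Finset.prod_singleton, hrec2, hIcc, hFsS2, hFsM2]
    ring
  have hF1 : Fpoly (as ++ [1]) = Fpoly as +
      (∏ i ∈ Finset.Icc M S, (MvPolynomial.X i : MvPolynomial ℕ ℤ)) * Fpoly as.dropLast := by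
    rw [Fpoly_eq_Fs, hsum1, hrec3, hIcc, hFsS1, hFsM1]
  have hprod : (∏ i ∈ Finset.Icc M (S + 1), (MvPolynomial.X i : MvPolynomial ℕ ℤ)) =
      (∏ i ∈ Finset.Icc M S, (MvPolynomial.X i : MvPolynomial ℕ ℤ)) *
        MvPolynomial.X (S + 1) :=
    Finset.prod_Icc_succ_top (by omega) _
  constructor
  · rw [hF2, hprod]
  · rw [hF2, hF1]
    ring

end TwoBridge

end
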